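/- Let f = n/d be an irreducible strictly proper rational function over ℂ of degree k ≥ 1, and let λ_1,…,λ_k ∈ ℂ be pairwise distinct points with d(λ_j) ≠ 0 for all j. Set h_j = n(λ_j)/d(λ_j). Then there exist weights w_1,…,w_k ∈ ℂ such that f coincides with the unstructured barycentric form determined by λ_j, h_j, w_j; equivalently, n(s)·D(s) = d(s)·N(s) as polynomials, where N and D are the cleared numerator and denominator of that barycentric form. -/

import Mathlib

open Polynomial BigOperators

/-- Any irreducible strictly proper rational function `f = n/d` of degree
`k ≥ 1` can be represented by the unstructured barycentric form with arbitrary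
distinct support points `λ_j` (not poles of `f`) and values `h_j = f(λ_j)`:
there exist weights `w_j` with `n · D = d · N` for the cleared numerator `N` and
denominator `D` of the barycentric form. -/
theorem stmt_0 (k : ℕ) (hk : 1 ≤ k) (n d : Polynomial ℂ) (hd : d ≠ 0)
    (hprop : n.degree < d.degree) (hirr : IsCoprime n d) (hdeg : d.natDegree = k)
    (lam : Fin k → ℂ) (hlam : Function.Injective lam)
    (hpole : ∀ j, d.eval (lam j) ≠ 0)
    (h : Fin k → ℂ) (hh : ∀ j, h j = n.eval (lam j) / d.eval (lam j)) :
    ∃ w : Fin k → ℂ,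
      n * ((∏ j, (X - C (lam j))) +
            ∑ j, C (w j) * ∏ l ∈ Finset.univ.erase j, (X - C (lam l)))
        = d * (∑ j, C (h j * w j) * ∏ l ∈ Finset.univ.erase j, (X - C (lam l))) := by
  classical
  set c := d.leadingCoeff with hc
  have hc0 : c ≠ 0 := leadingCoeff_ne_zero.mpr hd
  set P : Polynomial ℂ := ∏ j, (X - C (lam j)) with hP
  set q : Fin k → Polynomial ℂ :=
    fun j => ∏ l ∈ Finset.univ.erase j, (X - C (lam l)) with hq
  have hPmonic : P.Monic := monic_prod_of_monic _ _ (fun j _ => monic_X_sub_C _)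
  have hPdeg : P.natDegree = k := by
    rw [hP, natDegree_prod _ _ (fun j _ => X_sub_C_ne_zero _)]
    simp [natDegree_X_sub_C]
  have hqmonic : ∀ j, (q j).Monic :=
    fun j => monic_prod_of_monic _ _ (fun l _ => monic_X_sub_C _)
  have hqdeg : ∀ j, (q j).natDegree = k - 1 := by
    intro j
    rw [hq, natDegree_prod _ _ (fun l _ => X_sub_C_ne_zero _)]
    simp [natDegree_X_sub_C, Finset.card_erase_of_mem]
  have hqeval0 : ∀ i j : Fin k, i ≠ j → (q j).eval (lam i) = 0 := by
    intro i j hij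
    rw [hq, eval_prod]
    exact Finset.prod_eq_zero (Finset.mem_erase.mpr ⟨hij, Finset.mem_univ _⟩)
      (by simp)
  have hqevalne : ∀ j : Fin k, (q j).eval (lam j) ≠ 0 := by
    intro j
    rw [hq, eval_prod]
    refine Finset.prod_ne_zero_iff.mpr fun l hl => ?_
    have hne : l ≠ j := (Finset.mem_erase.mp hl).1
    simp only [eval_sub, eval_X, eval_C, sub_ne_zero]
    exact fun hll => hne (hlam hll.symm)
  -- e = d/c - P, degree < k
  set e : Polynomial ℂ := C c⁻¹ * d - P with he
  have hdegcd : (C c⁻¹ * d).degree = (k : WithBot ℕ) := by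
    rw [degree_C_mul (inv_ne_zero hc0), degree_eq_natDegree hd, hdeg]
  have hPdeg' : P.degree = (k : WithBot ℕ) := by
    rw [degree_eq_natDegree hPmonic.ne_zero, hPdeg]
  have hedeg : e.degree < (k : WithBot ℕ) := by
    have := degree_sub_lt (hdegcd.trans hPdeg'.symm)
      (mul_ne_zero (C_ne_zero.mpr (inv_ne_zero hc0)) hd)
      (by rw [leadingCoeff_mul, leadingCoeff_C, hPmonic.leadingCoeff, ← hc,
              inv_mul_cancel₀ hc0])
    rw [hdegcd] at this
    exact this
  set w : Fin k → ℂ := fun j => e.eval (lam j) / (q j).eval (lam j) with hw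
  refine ⟨w, ?_⟩
  have hinj : Set.InjOn lam ↑(Finset.univ : Finset (Fin k)) := hlam.injOn
  have hsumdeg : ∀ (a : Fin k → ℂ),
      (∑ j, C (a j) * q j).degree < (k : WithBot ℕ) := by
    intro a
    refine lt_of_le_of_lt (degree_sum_le _ _) ?_
    refine Finset.sup_lt_iff (WithBot.bot_lt_coe k) |>.mpr ?_
    intro j _
    refine lt_of_le_of_lt (degree_mul_le _ _) ?_
    have : (q j).degree = ((k - 1 : ℕ) : WithBot ℕ) := by
      rw [degree_eq_natDegree (hqmonic j).ne_zero, hqdeg j]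
    calc (C (a j)).degree + (q j).degree ≤ 0 + ((k-1 : ℕ) : WithBot ℕ) := by
          exact add_le_add degree_C_le (le_of_eq this)
      _ < (k : WithBot ℕ) := by
          rw [zero_add]
          exact_mod_cast Nat.sub_lt hk zero_lt_one
  have hsumeval : ∀ (a : Fin k → ℂ) (i : Fin k),
      (∑ j, C (a j) * q j).eval (lam i) = a i * (q i).eval (lam i) := by
    intro a i
    rw [eval_finset_sum]
    rw [Finset.sum_eq_single i]
    · simp
    · intro j _ hji
      simp [hqeval0 i j (Ne.symm hji)]
    · simp
  -- key 1: ∑ w_j q_j = e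
  have key1 : (∑ j, C (w j) * q j) = e := by
    refine Polynomial.eq_of_degrees_lt_of_eval_index_eq Finset.univ hinj ?_ ?_ ?_
    · rw [Finset.card_univ, Fintype.card_fin]; exact hsumdeg w
    · rw [Finset.card_univ, Fintype.card_fin]; exact hedeg
    · intro i _
      rw [hsumeval, hw]
      simp only []
      rw [div_mul_cancel₀ _ (hqevalne i)]
  -- key 2: ∑ h_j w_j q_j = n/c
  have key2 : (∑ j, C (h j * w j) * q j) = C c⁻¹ * n := by
    refine Polynomial.eq_of_degrees_lt_of_eval_index_eq Finset.univ hinj ?_ ?_ ?_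
    · rw [Finset.card_univ, Fintype.card_fin]; exact hsumdeg _
    · rw [Finset.card_univ, Fintype.card_fin]
      refine lt_of_le_of_lt (degree_mul_le _ _) ?_
      calc (C c⁻¹).degree + n.degree ≤ 0 + n.degree := add_le_add degree_C_le le_rfl
        _ < (k : WithBot ℕ) := by
            rw [zero_add]
            calc n.degree < d.degree := hprop
              _ = (k : WithBot ℕ) := by rw [degree_eq_natDegree hd, hdeg]
    · intro i _
      rw [hsumeval, hw, hh i]
      have heval : e.eval (lam i) = c⁻¹ * d.eval (lam i) := by
        have : P.eval (lam i) = 0 := by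
          rw [hP, eval_prod]
          exact Finset.prod_eq_zero (Finset.mem_univ i) (by simp)
        simp [he, this]
      simp only [eval_mul, eval_C]
      rw [heval, mul_assoc, div_mul_cancel₀ _ (hqevalne i)]
      field_simp [hpole i]
  rw [key1, key2, he]
  ring
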